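/- Let X be a random variable on ℤ with probability mass function proportional to exp(-(x - μ)²/(2σ²)) (a discrete Gaussian centered at μ with scale σ). Then E[X] = μ if and only if 2μ is an integer. -/

import Mathlib

open Real

noncomputable section DGaussAux

namespace DGauss

/-- The centered first-moment sum of the discrete Gaussian. -/
def F (t μ : ℝ) : ℝ := ∑' n : ℤ, ((n:ℝ) - μ) * Real.exp (-((n:ℝ) - μ)^2 / t)

lemma summable_master (t μ : ℝ) (ht : 0 < t) (k : ℕ) :
    Summable fun n : ℤ => ((|n| : ℤ) : ℝ)^k * Real.exp (-((n:ℝ)-μ)^2 / t) := by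
  have h := summable_pow_mul_jacobiTheta₂_term_bound (|μ|/(π*t)) (T := 1/(π*t))
    (by positivity) k
  apply Summable.of_nonneg_of_le (fun n => by positivity) _ (h.mul_left (Real.exp (μ^2/t)))
  intro n
  rw [mul_left_comm, ← Real.exp_add]
  apply mul_le_mul_of_nonneg_left _ (by positivity)
  apply Real.exp_le_exp.2
  have hπ := Real.pi_pos
  have h1 : -Real.pi * (1/(π*t) * (n:ℝ)^2 - 2*(|μ|/(π*t)) * ((|n| : ℤ) : ℝ))
      = (-(n:ℝ)^2 + 2 * |μ| * |(n:ℝ)|)/t := by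
    push_cast
    field_simp
    ring
  rw [h1, ← add_div, div_le_div_iff_of_pos_right ht]
  nlinarith [le_abs_self ((n:ℝ)*μ), abs_mul (n:ℝ) μ, abs_nonneg ((n:ℝ)*μ)]

lemma summable_exp (t μ : ℝ) (ht : 0 < t) :
    Summable fun n : ℤ => Real.exp (-((n:ℝ)-μ)^2 / t) := by
  simpa using summable_master t μ ht 0

lemma summable_linear (t μ c : ℝ) (ht : 0 < t) :
    Summable fun n : ℤ => ((n:ℝ) - c) * Real.exp (-((n:ℝ)-μ)^2 / t) := by
  apply Summable.of_norm_bounded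
    (g := fun n : ℤ => ((|n| : ℤ) : ℝ)^1 * Real.exp (-((n:ℝ)-μ)^2 / t)
      + |c| * Real.exp (-((n:ℝ)-μ)^2 / t))
    ((summable_master t μ ht 1).add ((summable_exp t μ ht).mul_left _))
  intro n
  rw [norm_mul, Real.norm_eq_abs, Real.norm_eq_abs, Real.abs_exp, pow_one]
  have : |(n:ℝ) - c| ≤ |(n:ℝ)| + |c| := abs_sub (n:ℝ) c
  push_cast
  nlinarith [Real.exp_pos (-((n:ℝ)-μ)^2 / t), abs_nonneg ((n:ℝ))]

lemma key_identity (t μ : ℝ) (ht : 0 < t) :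
    F t μ = -2*π*t*Real.sqrt (π*t) *
      ∑' n : ℕ, ((n:ℝ)+1) * Real.exp (-π^2*t*((n:ℝ)+1)^2) * Real.sin (2*π*((n:ℝ)+1)*μ) := by
  have hπ := Real.pi_pos
  have hπt : 0 < π*t := by positivity
  set τ : ℂ := ((π*t)⁻¹ : ℝ) * Complex.I with hτ_def
  set z : ℂ := (-(μ/(π*t)) : ℝ) * Complex.I with hz_def
  set τ' : ℂ := ((π*t : ℝ) : ℂ) * Complex.I with hτ'_def
  set w : ℂ := ((-μ : ℝ) : ℂ) with hw_def
  have hπ0c : (π:ℂ) ≠ 0 := by exact_mod_cast hπ.ne'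
  have hτim : 0 < τ.im := by
    rw [hτ_def]
    simp
    positivity
  have hτ'im : 0 < τ'.im := by
    rw [hτ'_def]
    simp
    positivity
  have hτ0 : τ ≠ 0 := by
    rw [hτ_def]
    exact mul_ne_zero (by exact_mod_cast (inv_pos.2 hπt).ne') Complex.I_ne_zero
  have hπt0 : ((π*t : ℝ) : ℂ) ≠ 0 := by exact_mod_cast hπt.ne'
  have ht0 : ((t : ℝ) : ℂ) ≠ 0 := by exact_mod_cast ht.ne'
  have h1 : z/τ = w := by
    rw [div_eq_iff hτ0, hz_def, hτ_def, hw_def]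
    push_cast
    field_simp
  have h2 : -1/τ = τ' := by
    rw [div_eq_iff hτ0, hτ_def, hτ'_def]
    have : ((π*t : ℝ):ℂ) * Complex.I * (((π*t)⁻¹ : ℝ) * Complex.I)
        = ((π*t : ℝ):ℂ) * (((π*t)⁻¹ : ℝ):ℂ) * (Complex.I*Complex.I) := by ring
    rw [this, Complex.I_mul_I]
    push_cast
    field_simp [hπ0c, ht0]
  have h3 : -Complex.I*τ = (((π*t)⁻¹ : ℝ) : ℂ) := by
    rw [hτ_def]
    have : -Complex.I * ((((π*t)⁻¹ : ℝ):ℂ) * Complex.I)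
        = -(Complex.I*Complex.I) * (((π*t)⁻¹ : ℝ):ℂ) := by ring
    rw [this, Complex.I_mul_I]
    ring
  have h4 : (1:ℂ)/(-Complex.I*τ)^(1/2 : ℂ) = ((Real.sqrt (π*t) : ℝ) : ℂ) := by
    rw [h3, show ((1:ℂ)/2) = (((1:ℝ)/2 : ℝ) : ℂ) by norm_num,
      ← Complex.ofReal_cpow (by positivity) ((1:ℝ)/2)]
    rw [Real.inv_rpow hπt.le, Real.sqrt_eq_rpow]
    push_cast
    rw [one_div, inv_inv]
  have h5 : -(π:ℂ)*Complex.I*z^2/τ = ((μ^2/t : ℝ) : ℂ) := by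
    rw [div_eq_iff hτ0, hz_def, hτ_def]
    have hexpand : -(π:ℂ)*Complex.I*((-(μ/(π*t)) : ℝ) * Complex.I)^2
        = (π:ℂ) * ((-(μ/(π*t)) : ℝ):ℂ)^2 * (-(Complex.I*Complex.I*Complex.I)) := by ring
    have hrhs : ((μ^2/t : ℝ) : ℂ) * ((((π*t)⁻¹ : ℝ):ℂ) * Complex.I)
        = ((μ^2/t : ℝ):ℂ) * (((π*t)⁻¹ : ℝ):ℂ) * Complex.I := by ring
    rw [hexpand, hrhs, Complex.I_mul_I]
    push_cast
    field_simp [hπ0c, ht0]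
  have h6 : τ⁻¹ = -(((π*t:ℝ):ℂ) * Complex.I) := by
    have := h2
    rw [neg_div, neg_eq_iff_eq_neg] at this
    rw [← this, one_div]
  have h7 : 2*(π:ℂ)*Complex.I*z = ((2*μ/t : ℝ) : ℂ) := by
    rw [hz_def]
    have : 2*(π:ℂ)*Complex.I*(((-(μ/(π*t)) : ℝ):ℂ) * Complex.I)
        = 2*(π:ℂ)*((-(μ/(π*t)) : ℝ):ℂ)*(Complex.I*Complex.I) := by ring
    rw [this, Complex.I_mul_I]
    push_cast
    field_simp [hπ0c, ht0]
  -- terms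
  set E : ℂ := Complex.exp ((μ^2/t : ℝ) : ℂ) with hE_def
  have hE0 : E ≠ 0 := Complex.exp_ne_zero _
  have hterm : ∀ n : ℤ, jacobiTheta₂_term n z τ
      = E * Complex.exp ((-((n:ℝ)-μ)^2/t : ℝ) : ℂ) := by
    intro n
    rw [jacobiTheta₂_term, hE_def, ← Complex.exp_add]
    congr 1
    rw [hz_def, hτ_def]
    have e1 : 2*(π:ℂ)*Complex.I*(n:ℂ)*(((-(μ/(π*t)):ℝ):ℂ) * Complex.I)
          + (π:ℂ)*Complex.I*(n:ℂ)^2*((((π*t)⁻¹:ℝ):ℂ) * Complex.I)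
        = (2*(π:ℂ)*(n:ℂ)*((-(μ/(π*t)):ℝ):ℂ)
          + (π:ℂ)*(n:ℂ)^2*(((π*t)⁻¹:ℝ):ℂ)) * (Complex.I*Complex.I) := by ring
    rw [e1, Complex.I_mul_I]
    push_cast
    field_simp [hπ0c, ht0]
    ring
  have hterm' : ∀ n : ℤ, jacobiTheta₂'_term n z τ
      = (2*(π:ℂ)*Complex.I*E) * ((n:ℂ) * Complex.exp ((-((n:ℝ)-μ)^2/t : ℝ) : ℂ)) := by
    intro n
    rw [jacobiTheta₂'_term, hterm n]
    ring
  -- summability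
  have hsum0 : Summable (fun n : ℤ => Complex.exp ((-((n:ℝ)-μ)^2/t : ℝ) : ℂ)) := by
    have := (hasSum_jacobiTheta₂_term z hτim).summable.div_const E
    refine this.congr fun n => ?_
    rw [hterm n, mul_comm, mul_div_assoc, div_self hE0, mul_one]
  have hsum1 : Summable (fun n : ℤ => (n:ℂ) * Complex.exp ((-((n:ℝ)-μ)^2/t : ℝ) : ℂ)) := by
    have hc : (2*(π:ℂ)*Complex.I*E) ≠ 0 := by
      apply mul_ne_zero (mul_ne_zero (mul_ne_zero two_ne_zero hπ0c) Complex.I_ne_zero) hE0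
    have := (hasSum_jacobiTheta₂'_term z hτim).summable.div_const (2*(π:ℂ)*Complex.I*E)
    refine this.congr fun n => ?_
    rw [hterm' n, mul_comm, mul_div_assoc, div_self hc, mul_one]
  -- theta sums
  have hθ : jacobiTheta₂ z τ = E * ∑' n : ℤ, Complex.exp ((-((n:ℝ)-μ)^2/t : ℝ) : ℂ) := by
    rw [jacobiTheta₂, tsum_congr hterm, tsum_mul_left]
  have hθ' : jacobiTheta₂' z τ
      = (2*(π:ℂ)*Complex.I*E) * ∑' n : ℤ, (n:ℂ) * Complex.exp ((-((n:ℝ)-μ)^2/t : ℝ) : ℂ) := by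
    rw [jacobiTheta₂', tsum_congr hterm', tsum_mul_left]
  set Sig0 : ℂ := ∑' n : ℤ, Complex.exp ((-((n:ℝ)-μ)^2/t : ℝ) : ℂ) with hSig0_def
  set Sig1 : ℂ := ∑' n : ℤ, (n:ℂ) * Complex.exp ((-((n:ℝ)-μ)^2/t : ℝ) : ℂ) with hSig1_def
  set X : ℂ := jacobiTheta₂' w τ' with hX_def
  set Y : ℂ := jacobiTheta₂ w τ' with hY_def
  set s : ℂ := ((Real.sqrt (π*t) : ℝ) : ℂ) with hs_def
  -- functional equations
  have hFE : jacobiTheta₂ z τ = s * E * Y := by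
    rw [jacobiTheta₂_functional_equation z τ, h1, h2, h4, h5, hE_def]
  have hFE' : jacobiTheta₂' z τ = s * E * -(((π*t:ℝ):ℂ) * Complex.I)
      * (X - ((2*μ/t : ℝ):ℂ) * Y) := by
    rw [jacobiTheta₂'_functional_equation z τ, h1, h2, h4, h5, hE_def, div_eq_mul_inv, h6, h7]
  -- solve for Sig0, Sig1
  have hSig0 : Sig0 = s * Y := by
    apply mul_left_cancel₀ hE0
    rw [← hθ, hFE]
    ring
  have hSig1 : Sig1 = -((t:ℂ)/2) * s * X + (μ:ℂ) * s * Y := by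
    have hc : (2*(π:ℂ)*Complex.I*E) ≠ 0 := by
      apply mul_ne_zero (mul_ne_zero (mul_ne_zero two_ne_zero hπ0c) Complex.I_ne_zero) hE0
    apply mul_left_cancel₀ hc
    rw [← hθ', hFE']
    push_cast
    field_simp [ht0]
    ring
  -- cast F
  have hA : ((F t μ : ℝ) : ℂ) = Sig1 - (μ:ℂ) * Sig0 := by
    rw [F, Complex.ofReal_tsum, hSig1_def, ← tsum_mul_left (a := (μ:ℂ)),
      ← Summable.tsum_sub hsum1 (hsum0.mul_left (μ:ℂ))]
    apply tsum_congr
    intro n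
    push_cast
    ring
  have hmain : ((F t μ : ℝ) : ℂ) = -((t:ℂ)/2) * s * X := by
    rw [hA, hSig0, hSig1]
    ring
  -- Part II : unpair X into a sine series
  set q : ℕ → ℝ := fun k => 4*π*(k:ℝ)*Real.exp (-(π^2*t*(k:ℝ)^2)) * Real.sin (2*π*(k:ℝ)*μ)
    with hq_def
  have hterm2 : ∀ k : ℤ, jacobiTheta₂'_term k w τ'
      = 2*(π:ℂ)*Complex.I*(k:ℂ) * Complex.exp ((-(π^2*t*(k:ℝ)^2) : ℝ):ℂ)
        * Complex.exp (((-(2*π*(k:ℝ)*μ) : ℝ):ℂ) * Complex.I) := by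
    intro k
    rw [jacobiTheta₂'_term, jacobiTheta₂_term]
    have hexparg : 2*(π:ℂ)*Complex.I*(k:ℂ)*w + (π:ℂ)*Complex.I*(k:ℂ)^2*τ'
        = ((-(π^2*t*(k:ℝ)^2) : ℝ):ℂ) + ((-(2*π*(k:ℝ)*μ) : ℝ):ℂ) * Complex.I := by
      rw [hw_def, hτ'_def]
      have e1 : 2*(π:ℂ)*Complex.I*(k:ℂ)*((-μ:ℝ):ℂ) + (π:ℂ)*Complex.I*(k:ℂ)^2*(((π*t:ℝ):ℂ) * Complex.I)
          = (π:ℂ)*(k:ℂ)^2*((π*t:ℝ):ℂ)*(Complex.I*Complex.I)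
            + (2*(π:ℂ)*(k:ℂ)*((-μ:ℝ):ℂ)) * Complex.I := by ring
      rw [e1, Complex.I_mul_I]
      push_cast
      ring
    rw [hexparg, Complex.exp_add]
    ring
  have hpair : ∀ k : ℤ, jacobiTheta₂'_term k w τ' + jacobiTheta₂'_term (-k) w τ'
      = ((4*π*(k:ℝ)*Real.exp (-(π^2*t*(k:ℝ)^2)) * Real.sin (2*π*(k:ℝ)*μ) : ℝ) : ℂ) := by
    intro k
    rw [hterm2 k, hterm2 (-k)]
    have hc1 : ((-k : ℤ):ℝ) = -((k:ℤ):ℝ) := by push_cast; ring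
    have hc2 : ((-k : ℤ):ℂ) = -((k:ℤ):ℂ) := by push_cast; ring
    rw [hc1, hc2]
    have hsq : (-(π^2*t*(-(k:ℝ))^2) : ℝ) = (-(π^2*t*(k:ℝ)^2) : ℝ) := by ring
    have hang : (-(2*π*(-(k:ℝ))*μ) : ℝ) = (2*π*(k:ℝ)*μ : ℝ) := by ring
    rw [hsq, hang]
    rw [Complex.exp_mul_I, Complex.exp_mul_I]
    have hombre : ((-(2*π*(k:ℝ)*μ) : ℝ):ℂ) = -(((2*π*(k:ℝ)*μ : ℝ)):ℂ) := by push_cast; ring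
    rw [hombre, Complex.cos_neg, Complex.sin_neg]
    rw [← Complex.ofReal_sin, ← Complex.ofReal_exp]
    push_cast
    have hI := Complex.I_mul_I
    ring_nf
    rw [Complex.I_sq]
    ring
  have hXsum : HasSum (fun n : ℤ => jacobiTheta₂'_term n w τ') X :=
    hasSum_jacobiTheta₂'_term w hτ'im
  have h0term : jacobiTheta₂'_term (0:ℤ) w τ' = 0 := by
    rw [jacobiTheta₂'_term]
    simp
  have hnat : HasSum (fun n : ℕ => ((q n : ℝ) : ℂ)) X := by
    have h := hXsum.nat_add_neg
    rw [h0term, add_zero] at h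
    have hfun : (fun n : ℕ => jacobiTheta₂'_term (n:ℤ) w τ' + jacobiTheta₂'_term (-(n:ℤ)) w τ')
        = fun n : ℕ => ((q n : ℝ) : ℂ) := by
      funext n
      rw [hpair (n:ℤ), hq_def]
      push_cast
      ring_nf
    rw [← hfun]
    exact h
  have hqsum : Summable q := Complex.summable_ofReal.1 hnat.summable
  have hXval : X = ((∑' n : ℕ, q n : ℝ) : ℂ) :=
    hnat.unique (Complex.hasSum_ofReal.2 hqsum.hasSum)
  have hreal : F t μ = -(t/2) * Real.sqrt (π*t) * ∑' n : ℕ, q n := by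
    have hc : ((F t μ : ℝ) : ℂ) = ((-(t/2) * Real.sqrt (π*t) * ∑' n : ℕ, q n : ℝ) : ℂ) := by
      rw [hmain, hXval, hs_def]
      push_cast
      ring
    exact_mod_cast hc
  have hq0 : q 0 = 0 := by rw [hq_def]; norm_num
  have hqshift : ∑' n : ℕ, q n = ∑' n : ℕ, q (n+1) := by
    rw [Summable.tsum_eq_zero_add hqsum, hq0, zero_add]
  have hqv : ∀ n : ℕ, q (n+1)
      = 4*π*(((n:ℝ)+1) * Real.exp (-π^2*t*((n:ℝ)+1)^2) * Real.sin (2*π*((n:ℝ)+1)*μ)) := by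
    intro n
    rw [hq_def]
    push_cast
    ring_nf
  rw [hreal, hqshift, tsum_congr hqv, tsum_mul_left]
  ring

lemma abs_sin_nat_mul (θ : ℝ) : ∀ k : ℕ, |Real.sin ((k:ℝ)*θ)| ≤ (k:ℝ) * |Real.sin θ| := by
  intro k
  induction k with
  | zero => simp
  | succ m ih =>
    have h1 : ((m:ℝ)+1)*θ = (m:ℝ)*θ + θ := by ring
    push_cast
    rw [h1, Real.sin_add]
    calc |Real.sin ((m:ℝ)*θ) * Real.cos θ + Real.cos ((m:ℝ)*θ) * Real.sin θ|
        ≤ |Real.sin ((m:ℝ)*θ) * Real.cos θ| + |Real.cos ((m:ℝ)*θ) * Real.sin θ| := abs_add_le _ _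
      _ ≤ (m:ℝ) * |Real.sin θ| + 1 * |Real.sin θ| := by
          rw [abs_mul, abs_mul]
          apply add_le_add
          · calc |Real.sin ((m:ℝ)*θ)| * |Real.cos θ| ≤ |Real.sin ((m:ℝ)*θ)| * 1 :=
                  mul_le_mul_of_nonneg_left (abs_cos_le_one θ) (abs_nonneg _)
              _ = |Real.sin ((m:ℝ)*θ)| := mul_one _
              _ ≤ (m:ℝ) * |Real.sin θ| := ih
          · exact mul_le_mul_of_nonneg_right (abs_cos_le_one _) (abs_nonneg _)
      _ = ((m:ℝ)+1) * |Real.sin θ| := by ring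

lemma aux_sq_three (k : ℕ) : ((k:ℝ)+1)^2 ≤ 3^(k+1) := by
  induction k with
  | zero => norm_num
  | succ m ih =>
    rcases Nat.eq_zero_or_pos m with h | h
    · subst h; norm_num
    · have h1 : (1:ℝ) ≤ (m:ℝ) := by exact_mod_cast h
      push_cast at ih ⊢
      calc ((m:ℝ)+1+1)^2 ≤ 3*((m:ℝ)+1)^2 := by nlinarith
        _ ≤ 3*3^(m+1) := by linarith
        _ = 3^(m+1+1) := by ring

lemma exp_285_big : (13:ℝ) < Real.exp (2.85) := by
  have h1 := Real.exp_one_gt_d9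
  have h2 : Real.exp (2.85) = Real.exp 1 * Real.exp 1 * Real.exp (0.85) := by
    rw [← Real.exp_add, ← Real.exp_add]; norm_num
  have h3 : (1.85:ℝ) ≤ Real.exp (0.85) := by
    have := Real.add_one_le_exp (0.85:ℝ)
    linarith
  have h4 : (0:ℝ) < Real.exp (0.85) := Real.exp_pos _
  nlinarith

lemma sineSum_pos {a θ : ℝ} (ha : (19:ℝ)/20 ≤ a) (hθ0 : 0 < θ) (hθ1 : θ < π) :
    0 < ∑' n : ℕ, ((n:ℝ)+1) * Real.exp (-a*((n:ℝ)+1)^2) * Real.sin (((n:ℝ)+1)*θ) := by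
  have hsθ : 0 < Real.sin θ := Real.sin_pos_of_pos_of_lt_pi hθ0 hθ1
  set E : ℝ := Real.exp (-a) with hE_def
  have hE0 : 0 < E := Real.exp_pos _
  have hE1 : E < 1 := Real.exp_lt_one_iff.2 (by linarith)
  set s : ℝ := 3 * E^3 with hs_def
  have hs0 : 0 < s := by positivity
  have hE3 : 12 * E^3 < 1 := by
    have h1 : E^3 = Real.exp (-(3*a)) := by
      rw [hE_def, ← Real.exp_nat_mul]; ring_nf
    have h2 : Real.exp (-(3*a)) ≤ Real.exp (-(2.85:ℝ)) := Real.exp_le_exp.2 (by linarith)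
    have h3 : Real.exp (-(2.85:ℝ)) * Real.exp (2.85:ℝ) = 1 := by
      rw [← Real.exp_add]; norm_num
    have h4 := exp_285_big
    have h5 := Real.exp_pos (-(2.85:ℝ))
    nlinarith
  have hs1 : s < 1/4 := by rw [hs_def]; linarith
  set u : ℕ → ℝ := fun n => ((n:ℝ)+1) * Real.exp (-a*((n:ℝ)+1)^2) * Real.sin (((n:ℝ)+1)*θ)
    with hu_def
  have hexp_pow : ∀ n : ℕ, Real.exp (-a*((n:ℝ)+1)^2) = E^((n+1)^2 : ℕ) := by
    intro n
    rw [hE_def, ← Real.exp_nat_mul]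
    congr 1
    push_cast
    ring
  have hb : ∀ n : ℕ, |u n| ≤ (3*E*Real.sin θ) * s^n := by
    intro n
    have hn0 : (0:ℝ) ≤ n := Nat.cast_nonneg n
    have h1 : |u n| ≤ ((n:ℝ)+1)^2 * E^((n+1)^2 : ℕ) * Real.sin θ := by
      rw [hu_def]
      simp only []
      rw [abs_mul, abs_mul, hexp_pow n, abs_of_pos (by positivity : (0:ℝ) < (n:ℝ)+1),
        abs_of_pos (by positivity : (0:ℝ) < E^((n+1)^2 : ℕ))]
      have h2 := abs_sin_nat_mul θ (n+1)
      push_cast at h2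
      have h3 : |Real.sin (((n:ℝ)+1)*θ)| ≤ ((n:ℝ)+1) * Real.sin θ := by
        rw [abs_of_pos hsθ] at h2
        exact h2
      calc ((n:ℝ)+1) * E^((n+1)^2 : ℕ) * |Real.sin (((n:ℝ)+1)*θ)|
          ≤ ((n:ℝ)+1) * E^((n+1)^2 : ℕ) * (((n:ℝ)+1) * Real.sin θ) := by
            apply mul_le_mul_of_nonneg_left h3 (by positivity)
        _ = ((n:ℝ)+1)^2 * E^((n+1)^2 : ℕ) * Real.sin θ := by ring
    have h4 : E^((n+1)^2 : ℕ) ≤ E^(3*n+1) := by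
      apply pow_le_pow_of_le_one hE0.le hE1.le
      have h := Nat.le_self_pow (two_ne_zero) n
      nlinarith
    calc |u n| ≤ ((n:ℝ)+1)^2 * E^((n+1)^2 : ℕ) * Real.sin θ := h1
      _ ≤ 3^(n+1) * E^(3*n+1) * Real.sin θ := by
          apply mul_le_mul_of_nonneg_right _ hsθ.le
          apply mul_le_mul (aux_sq_three n) h4 (by positivity) (by positivity)
      _ = (3*E*Real.sin θ) * s^n := by
          rw [hs_def]
          rw [pow_succ, pow_add, pow_mul, mul_pow]
          ring
  have hgeom : Summable (fun n : ℕ => (3*E*Real.sin θ) * s^n) :=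
    (summable_geometric_of_lt_one hs0.le (by linarith)).mul_left _
  have hu_sum : Summable u := by
    apply Summable.of_norm_bounded hgeom
    intro n
    rw [Real.norm_eq_abs]
    exact hb n
  have hu1_sum : Summable (fun n => u (n+1)) := (summable_nat_add_iff 1).2 hu_sum
  have habs1 : Summable (fun n => |u (n+1)|) := hu1_sum.abs
  have hV : |∑' n : ℕ, u (n+1)| ≤ (3*E*Real.sin θ) * (s/(1-s)) := by
    calc |∑' n : ℕ, u (n+1)| ≤ ∑' n : ℕ, |u (n+1)| := by
          simpa [Real.norm_eq_abs] using
            norm_tsum_le_tsum_norm (by simpa [Real.norm_eq_abs] using habs1 :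
              Summable fun n => ‖u (n+1)‖)
      _ ≤ ∑' n : ℕ, (3*E*Real.sin θ) * s^(n+1) := by
          apply Summable.tsum_le_tsum (fun n => hb (n+1)) habs1
          exact ((summable_nat_add_iff 1).2 hgeom).congr (fun n => rfl)
      _ = (3*E*Real.sin θ) * (s/(1-s)) := by
          rw [tsum_mul_left]
          congr 1
          have h1 : ∀ n : ℕ, s^(n+1) = s * s^n := fun n => pow_succ' s n
          rw [funext h1, tsum_mul_left, tsum_geometric_of_lt_one hs0.le (by linarith)]
          rw [div_eq_mul_inv]
      _ = (3*E*Real.sin θ) * (s/(1-s)) := rfl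
  have hsplit : ∑' n, u n = u 0 + ∑' n, u (n+1) := Summable.tsum_eq_zero_add hu_sum
  have hu0 : u 0 = E * Real.sin θ := by
    rw [hu_def]
    norm_num
    exact Or.inl hE_def.symm
  have hkey : (3*E*Real.sin θ) * (s/(1-s)) < E * Real.sin θ := by
    have h1 : 0 < 1 - s := by linarith
    have h2 : s/(1-s) < 1/3 := by rw [div_lt_iff₀ h1]; nlinarith
    nlinarith [mul_pos hE0 hsθ, mul_pos (mul_pos hE0 hsθ) hs0]
  rw [hsplit, hu0]
  have := abs_lt.1 (lt_of_le_of_lt hV hkey)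
  linarith

def g (t u : ℝ) : ℝ := u * Real.exp (-u^2/t)

lemma summable_g (t μ : ℝ) (ht : 0 < t) : Summable fun n : ℤ => g t ((n:ℝ) - μ) :=
  summable_linear t μ μ ht

lemma hasSum_F (t μ : ℝ) (ht : 0 < t) : HasSum (fun n : ℤ => g t ((n:ℝ) - μ)) (F t μ) :=
  (summable_g t μ ht).hasSum

lemma g_neg (t u : ℝ) : g t (-u) = - g t u := by simp [g]

lemma neg_cast (t μ : ℝ) (n : ℕ) : g t ((-((n:ℤ)+1) : ℤ) - μ) = - g t ((n:ℝ) + 1 + μ) := by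
  push_cast
  rw [show (-((n:ℝ)+1) - μ) = -((n:ℝ) + 1 + μ) by ring, g_neg]

lemma summable_gA (t μ : ℝ) (ht : 0 < t) : Summable (fun n : ℕ => g t ((n:ℝ) - μ)) := by
  have := (summable_g t μ ht).comp_injective (i := fun n : ℕ => (n : ℤ))
    (fun a b h => by simpa using h)
  exact this.congr fun n => by simp

lemma summable_gB (t μ : ℝ) (ht : 0 < t) : Summable (fun n : ℕ => g t ((n:ℝ) + 1 + μ)) := by
  have := ((summable_g t μ ht).comp_injective (i := fun n : ℕ => -((n:ℤ) + 1))
    (fun a b h => by simpa using h)).neg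
  refine this.congr fun n => ?_
  simp only [Function.comp]
  rw [neg_cast t μ n, neg_neg]

lemma F_split (t μ : ℝ) (ht : 0 < t) :
    F t μ = (∑' n : ℕ, g t ((n:ℝ) - μ)) - ∑' n : ℕ, g t ((n:ℝ) + 1 + μ) := by
  have h1 : HasSum (fun n : ℤ => g t ((n:ℝ) - μ))
      ((∑' n : ℕ, g t ((n:ℝ) - μ)) + -(∑' n : ℕ, g t ((n:ℝ) + 1 + μ))) := by
    apply HasSum.of_nat_of_neg_add_one
    · exact_mod_cast (summable_gA t μ ht).hasSum
    · have hfa : (fun n : ℕ => g t (((-((n:ℤ)+1)) : ℤ) - μ))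
          = fun n : ℕ => -(g t ((n:ℝ)+1+μ)) := funext (neg_cast t μ)
      have h2 := (summable_gB t μ ht).hasSum.neg
      rw [← hfa] at h2
      exact h2
  have := (hasSum_F t μ ht).unique h1
  linarith

lemma tsum_gA_split (t μ : ℝ) (ht : 0 < t) :
    (∑' n : ℕ, g t ((n:ℝ) - μ)) = -g t μ + ∑' n : ℕ, g t ((n:ℝ) + 1 - μ) := by
  rw [Summable.tsum_eq_zero_add (summable_gA t μ ht)]
  congr 1
  · simpa using g_neg t μ
  · apply tsum_congr; intro n; push_cast; ring_nf

/-- F t μ = -g t μ + ∑' (g (n+1-μ) - g(n+1+μ)) -/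
lemma F_split2 (t μ : ℝ) (ht : 0 < t) :
    F t μ = -g t μ + ∑' n : ℕ, (g t ((n:ℝ) + 1 - μ) - g t ((n:ℝ) + 1 + μ)) := by
  have hsA : Summable (fun n : ℕ => g t ((n:ℝ) + 1 - μ)) := by
    have := (summable_nat_add_iff 1).2 (summable_gA t μ ht)
    refine this.congr fun n => ?_
    push_cast; ring_nf
  have hd := Summable.tsum_sub hsA (summable_gB t μ ht)
  rw [F_split t μ ht, tsum_gA_split t μ ht, hd]
  ring

/-- F t μ = ∑' (g (n+1-μ) - g(n+μ)) -/
lemma F_split3 (t μ : ℝ) (ht : 0 < t) :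
    F t μ = ∑' n : ℕ, (g t ((n:ℝ) + 1 - μ) - g t ((n:ℝ) + μ)) := by
  have hsA : Summable (fun n : ℕ => g t ((n:ℝ) + 1 - μ)) := by
    have := (summable_nat_add_iff 1).2 (summable_gA t μ ht)
    refine this.congr fun n => ?_
    push_cast; ring_nf
  have hsB : Summable (fun n : ℕ => g t ((n:ℝ) + μ)) := by
    have := (summable_g t (-μ) ht).comp_injective (i := fun n : ℕ => (n : ℤ))
      (fun a b h => by simpa using h)
    refine this.congr fun n => ?_
    simp only [Function.comp]
    norm_num
  have hB' : (∑' n : ℕ, g t ((n:ℝ) + μ)) = g t μ + ∑' n : ℕ, g t ((n:ℝ) + 1 + μ) := by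
    rw [Summable.tsum_eq_zero_add hsB]
    congr 1
    · norm_num
    · apply tsum_congr; intro n; push_cast; ring_nf
  have hd := Summable.tsum_sub hsA (summable_gB t μ ht)
  have hd2 := Summable.tsum_sub hsA hsB
  rw [F_split2 t μ ht, hd2]
  rw [hd] at *
  linarith

lemma hasDerivAt_g (t u : ℝ) :
    HasDerivAt (g t) ((1 - 2*u^2/t) * Real.exp (-u^2/t)) u := by
  have h1 : HasDerivAt (fun u : ℝ => -u^2/t) (-(2*u)/t) u := by
    simpa using (((hasDerivAt_pow 2 u)).neg.div_const t)
  have h3 := (hasDerivAt_id u).mul h1.exp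
  exact h3.congr_deriv (by simp only [id_eq]; ring)

lemma g_strictAntiOn (t : ℝ) (ht : 0 < t) :
    StrictAntiOn (g t) (Set.Ici (Real.sqrt (t/2))) := by
  apply strictAntiOn_of_deriv_neg (convex_Ici _)
  · refine Continuous.continuousOn ?_
    unfold g
    fun_prop
  · intro x hx
    rw [interior_Ici] at hx
    have hs : 0 ≤ Real.sqrt (t/2) := Real.sqrt_nonneg _
    have hx2 : t/2 < x^2 := by
      rw [← Real.sq_sqrt (by linarith : (0:ℝ) ≤ t/2)]
      have := Set.mem_Ioi.1 hx
      nlinarith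
    rw [(hasDerivAt_g t x).deriv]
    have := Real.exp_pos (-x^2/t)
    have h4 : 1 - 2*x^2/t < 0 := by
      rw [sub_neg, lt_div_iff₀ ht]
      nlinarith
    nlinarith

lemma F_neg_B1 {t μ : ℝ} (ht : 0 < t) (hμσ : Real.sqrt (t/2) ≤ μ) (h1 : μ < 1/2) :
    F t μ < 0 := by
  have hsA : Summable (fun n : ℕ => g t ((n:ℝ) + 1 - μ)) := by
    have := (summable_nat_add_iff 1).2 (summable_gA t μ ht)
    refine this.congr fun n => ?_
    push_cast; ring_nf
  have hsB : Summable (fun n : ℕ => g t ((n:ℝ) + μ)) := by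
    have := (summable_g t (-μ) ht).comp_injective (i := fun n : ℕ => (n : ℤ))
      (fun a b h => by simpa using h)
    refine this.congr fun n => ?_
    simp only [Function.comp]
    norm_num
  rw [F_split3 t μ ht]
  have key : ∀ n : ℕ, g t ((n:ℝ) + 1 - μ) - g t ((n:ℝ) + μ) < 0 := by
    intro n
    have hmem1 : ((n:ℝ) + μ) ∈ Set.Ici (Real.sqrt (t/2)) := by
      simp only [Set.mem_Ici]
      have : (0:ℝ) ≤ n := Nat.cast_nonneg n
      linarith
    have hmem2 : ((n:ℝ) + 1 - μ) ∈ Set.Ici (Real.sqrt (t/2)) := by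
      simp only [Set.mem_Ici]
      have : (0:ℝ) ≤ n := Nat.cast_nonneg n
      linarith
    have := g_strictAntiOn t ht hmem1 hmem2 (by linarith)
    linarith
  calc (∑' n : ℕ, (g t ((n:ℝ) + 1 - μ) - g t ((n:ℝ) + μ)))
      < ∑' _ : ℕ, (0:ℝ) := by
        apply Summable.tsum_lt_tsum (i := 0) (fun n => (key n).le) (key 0) (hsA.sub hsB)
        exact summable_zero
    _ = 0 := tsum_zero

lemma aux_sq_pow (n : ℕ) : ((n:ℝ)+2)^2 ≤ 4^(n+1) := by
  induction n with
  | zero => norm_num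
  | succ k ih =>
    have : (0:ℝ) ≤ (k:ℝ) := Nat.cast_nonneg k
    push_cast at ih ⊢
    calc ((k:ℝ)+1+2)^2 ≤ 4*((k:ℝ)+2)^2 := by nlinarith
      _ ≤ 4*4^(k+1) := by linarith
      _ = 4^(k+1+1) := by ring

lemma exp_ten_big : (2000:ℝ) < Real.exp 10 := by
  have h := Real.exp_one_gt_d9
  calc (2000:ℝ) < 2.7182818283^10 := by norm_num
    _ < (Real.exp 1)^10 := by
        apply pow_lt_pow_left₀ h (by norm_num)
        norm_num
    _ = Real.exp 10 := by
        rw [← Real.exp_nat_mul]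
        norm_num

lemma exp_six_big : (400:ℝ) < Real.exp 6 := by
  have h := Real.exp_one_gt_d9
  calc (400:ℝ) < 2.7182818283^6 := by norm_num
    _ < (Real.exp 1)^6 := by
        apply pow_lt_pow_left₀ h (by norm_num)
        norm_num
    _ = Real.exp 6 := by
        rw [← Real.exp_nat_mul]
        norm_num

lemma aux_sq1 {σ : ℝ} (h0 : 0 ≤ σ) (h1 : σ ≤ 28/125) (n : ℕ) :
    ((n:ℝ)+1+σ)^2 ≤ 4^(n+1) := by
  have h2 := aux_sq_pow n
  have hn0 : (0:ℝ) ≤ n := Nat.cast_nonneg n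
  have h3 : ((n:ℝ)+1+σ)^2 ≤ ((n:ℝ)+2)^2 := by nlinarith
  linarith

lemma aux_sq2 {σ : ℝ} (h0 : 0 ≤ σ) (h1 : σ ≤ 28/125) (n : ℕ) :
    3/5 + (n:ℝ) ≤ ((n:ℝ)+1-σ)^2 := by
  have hn0 : (0:ℝ) ≤ n := Nat.cast_nonneg n
  nlinarith [sq_nonneg ((n:ℝ)+1-σ), sq_nonneg ((n:ℝ)), sq_nonneg σ]

set_option maxHeartbeats 1000000 in
lemma F_neg_B2 {t μ : ℝ} (ht : 0 < t) (ht' : t ≤ 1/10) (h0 : 0 < μ)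
    (hμσ : μ < Real.sqrt (t/2)) : F t μ < 0 := by
  set σ := Real.sqrt (t/2) with hσdef
  have hσ0 : 0 ≤ σ := Real.sqrt_nonneg _
  have hσsq : σ^2 = t/2 := Real.sq_sqrt (by linarith)
  have hσ224 : σ ≤ 28/125 := by
    rw [hσdef, show (28:ℝ)/125 = Real.sqrt ((28/125)^2) from (Real.sqrt_sq (by norm_num)).symm]
    apply Real.sqrt_le_sqrt
    nlinarith
  have hμσ' : μ ≤ σ := hμσ.le
  have hμsq : μ^2 ≤ t/2 := by nlinarith
  -- the remainder terms
  set d : ℕ → ℝ := fun n => g t ((n:ℝ) + 1 - μ) - g t ((n:ℝ) + 1 + μ) with hd_def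
  set M : ℕ → ℝ := fun n => 2*((n:ℝ)+1+σ)^2/t * Real.exp (-((n:ℝ)+1-σ)^2/t) with hM_def
  have hMbound : ∀ n : ℕ, |d n| ≤ 2*μ * M n := by
    intro n
    have hconv : Convex ℝ (Set.Icc ((n:ℝ)+1-μ) ((n:ℝ)+1+μ)) := convex_Icc _ _
    have hderiv : ∀ x ∈ Set.Icc ((n:ℝ)+1-μ) ((n:ℝ)+1+μ),
        HasDerivWithinAt (g t) ((1 - 2*x^2/t) * Real.exp (-x^2/t))
          (Set.Icc ((n:ℝ)+1-μ) ((n:ℝ)+1+μ)) x :=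
      fun x _ => (hasDerivAt_g t x).hasDerivWithinAt
    have hn0 : (0:ℝ) ≤ n := Nat.cast_nonneg n
    have hbd : ∀ x ∈ Set.Icc ((n:ℝ)+1-μ) ((n:ℝ)+1+μ),
        ‖(1 - 2*x^2/t) * Real.exp (-x^2/t)‖ ≤ M n := by
      intro x hx
      obtain ⟨hx1, hx2⟩ := hx
      have hxl : (n:ℝ)+1-σ ≤ x := by linarith
      have hxu : x ≤ (n:ℝ)+1+σ := by linarith
      have hxpos : (0:ℝ) < x := by nlinarith
      have hx2t : 1 ≤ 4*x^2/t := by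
        rw [le_div_iff₀ ht]
        nlinarith
      have hq : 4*x^2/t = 2*(2*x^2/t) := by ring
      have habs : |1 - 2*x^2/t| ≤ 2*x^2/t := by
        rw [abs_le]
        have h2A : (0:ℝ) ≤ 2*x^2/t := by positivity
        constructor
        · linarith
        · linarith
      rw [norm_mul, Real.norm_eq_abs, Real.norm_eq_abs, Real.abs_exp, hM_def]
      have hsqle : ((n:ℝ)+1-σ)^2 ≤ x^2 := by nlinarith
      have hexp : Real.exp (-x^2/t) ≤ Real.exp (-((n:ℝ)+1-σ)^2/t) :=
        Real.exp_le_exp.2 ((div_le_div_iff_of_pos_right ht).2 (by linarith))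
      have h1 : 2*x^2/t ≤ 2*((n:ℝ)+1+σ)^2/t :=
        (div_le_div_iff_of_pos_right ht).2 (by nlinarith)
      calc |1 - 2*x^2/t| * Real.exp (-x^2/t) ≤ (2*x^2/t) * Real.exp (-x^2/t) :=
            mul_le_mul_of_nonneg_right habs (Real.exp_pos _).le
        _ ≤ 2*((n:ℝ)+1+σ)^2/t * Real.exp (-((n:ℝ)+1-σ)^2/t) :=
            mul_le_mul h1 hexp (Real.exp_pos _).le (by positivity)
    have := hconv.norm_image_sub_le_of_norm_hasDerivWithin_le hderiv hbd
      (Set.left_mem_Icc.2 (by linarith)) (Set.right_mem_Icc.2 (by linarith))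
    rw [Real.norm_eq_abs] at this
    calc |d n| ≤ M n * |((n:ℝ)+1+μ) - ((n:ℝ)+1-μ)| := by
          rw [hd_def]
          simpa [abs_sub_comm] using this
      _ = 2*μ * M n := by
          rw [show ((n:ℝ)+1+μ) - ((n:ℝ)+1-μ) = 2*μ by ring, abs_of_pos (by linarith)]
          ring
  -- summability of M via geometric series
  set r : ℝ := 4*Real.exp (-10) with hr_def
  have hrpos : 0 < r := by positivity
  have hr1 : r < 1/500 := by
    rw [hr_def, Real.exp_neg]
    rw [show (4:ℝ) * (Real.exp 10)⁻¹ = 4 / Real.exp 10 by ring,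
      div_lt_iff₀ (Real.exp_pos 10)]
    nlinarith [exp_ten_big]
  set C : ℝ := 8/t * Real.exp (-(3/5)/t) with hC_def
  have hCpos : 0 < C := by positivity
  have hMle : ∀ n : ℕ, M n ≤ C * r^n := by
    intro n
    have hn0 : (0:ℝ) ≤ n := Nat.cast_nonneg n
    have h1 : ((n:ℝ)+1+σ)^2 ≤ 4^(n+1) := aux_sq1 hσ0 hσ224 n
    have hge : 3/5 + (n:ℝ) ≤ ((n:ℝ)+1-σ)^2 := aux_sq2 hσ0 hσ224 n
    have h3 : Real.exp (-((n:ℝ)+1-σ)^2/t) ≤ Real.exp (-(3/5)/t) * Real.exp (-10)^n := by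
      have h4 : Real.exp (-((n:ℝ)+1-σ)^2/t) ≤ Real.exp (-(3/5)/t + (n:ℝ)*(-1/t)) := by
        apply Real.exp_le_exp.2
        rw [show -(3/5)/t + (n:ℝ)*(-1/t) = -((3/5 + (n:ℝ)))/t by ring]
        exact (div_le_div_iff_of_pos_right ht).2 (by linarith)
      rw [Real.exp_add] at h4
      refine h4.trans (mul_le_mul_of_nonneg_left ?_ (Real.exp_pos _).le)
      rw [← Real.exp_nat_mul]
      apply Real.exp_le_exp.2
      have h6 : (10:ℝ) ≤ 1/t := by rw [le_div_iff₀ ht]; linarith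
      have h7 : (n:ℝ) * (1/t) ≥ (n:ℝ) * 10 := by nlinarith
      have h8 : (n:ℝ) * (-1/t) = -((n:ℝ) * (1/t)) := by ring
      have h9 : (n:ℝ) * (-10:ℝ) = -((n:ℝ) * 10) := by ring
      rw [h8, h9]
      linarith
    calc M n = 2*((n:ℝ)+1+σ)^2/t * Real.exp (-((n:ℝ)+1-σ)^2/t) := rfl
      _ ≤ 2*4^(n+1)/t * (Real.exp (-(3/5)/t) * Real.exp (-10)^n) := by
          apply mul_le_mul _ h3 (Real.exp_pos _).le (by positivity)
          exact (div_le_div_iff_of_pos_right ht).2 (by nlinarith)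
      _ = C * r^n := by
          rw [hC_def, hr_def, mul_pow]
          ring
  have hgeom : Summable (fun n : ℕ => C * r^n) :=
    (summable_geometric_of_lt_one hrpos.le (by linarith)).mul_left C
  have hMpos : ∀ n, 0 ≤ M n := fun n => by positivity
  have hMsum : Summable M := Summable.of_nonneg_of_le hMpos hMle hgeom
  have hMtsum : ∑' n, M n ≤ C * (500/499) := by
    calc ∑' n, M n ≤ ∑' n : ℕ, C * r^n := Summable.tsum_le_tsum hMle hMsum hgeom
      _ = C * (1-r)⁻¹ := by rw [tsum_mul_left, tsum_geometric_of_lt_one hrpos.le (by linarith)]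
      _ ≤ C * (500/499) := by
          apply mul_le_mul_of_nonneg_left _ hCpos.le
          rw [inv_le_comm₀ (by linarith) (by norm_num)]
          linarith
  -- sum of d
  have habsd : Summable (fun n => |d n|) :=
    Summable.of_nonneg_of_le (fun n => abs_nonneg _) hMbound (hMsum.mul_left (2*μ))
  have hdsum : Summable d := by
    rw [← summable_norm_iff]
    simpa [Real.norm_eq_abs] using habsd
  have hD : |∑' n, d n| ≤ 2*μ * ∑' n, M n := by
    calc |∑' n, d n| ≤ ∑' n, |d n| := by
          simpa [Real.norm_eq_abs] using norm_tsum_le_tsum_norm (by simpa [Real.norm_eq_abs] using habsd : Summable fun n => ‖d n‖)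
      _ ≤ ∑' n, 2*μ * M n := Summable.tsum_le_tsum hMbound habsd (hMsum.mul_left _)
      _ = 2*μ * ∑' n, M n := tsum_mul_left
  -- numeric bound : C * (500/499) < 1/4
  set z : ℝ := (3/5)/t with hz_def
  have h1t : 1/t = (5/3)*z := by rw [hz_def]; field_simp
  have hz6 : 6 ≤ z := by
    rw [hz_def, le_div_iff₀ ht]; linarith
  have hez : 400*(z-5) ≤ Real.exp z := by
    have h1 : Real.exp z = Real.exp 6 * Real.exp (z-6) := by
      rw [← Real.exp_add]; ring_nf
    have h2 : z - 6 + 1 ≤ Real.exp (z-6) := Real.add_one_le_exp _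
    nlinarith [exp_six_big, Real.exp_pos (z-6)]
  have hfinal : C * (500/499) < 1/4 := by
    have hCz : -(3/5)/t = -z := by rw [hz_def]; ring
    rw [hC_def, hCz, Real.exp_neg]
    have hE := Real.exp_pos z
    rw [show 8/t * (Real.exp z)⁻¹ * (500/499) = (8*(1/t)*(500/499)) / Real.exp z by ring,
      div_lt_iff₀ hE]
    nlinarith
  -- conclude
  have hgμ : μ/2 ≤ g t μ := by
    have h1 : μ^2/t ≤ 1/2 := by rw [div_le_iff₀ ht]; nlinarith
    have h2 : (1:ℝ)/2 ≤ Real.exp (-μ^2/t) := by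
      have hh : Real.exp ((1:ℝ)/2) ^ 2 = Real.exp 1 := by
        rw [← Real.exp_nat_mul]; norm_num
      have h3 : Real.exp ((1:ℝ)/2) ≤ 2 := by
        nlinarith [Real.exp_one_lt_d9, Real.exp_pos ((1:ℝ)/2)]
      have h4 : Real.exp (-μ^2/t) * Real.exp ((1:ℝ)/2) ≥ 1 := by
        rw [← Real.exp_add]
        have : (0:ℝ) ≤ -μ^2/t + 1/2 := by
          rw [neg_div]
          linarith
        calc (1:ℝ) = Real.exp 0 := Real.exp_zero.symm
          _ ≤ _ := Real.exp_le_exp.2 this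
      nlinarith [Real.exp_pos (-μ^2/t)]
    calc μ/2 = μ * (1/2) := by ring
      _ ≤ μ * Real.exp (-μ^2/t) := mul_le_mul_of_nonneg_left h2 h0.le
      _ = g t μ := rfl
  have hfin := F_split2 t μ ht
  have hDlt : |∑' n, d n| < μ/2 := by
    calc |∑' n, d n| ≤ 2*μ * ∑' n, M n := hD
      _ ≤ 2*μ * (C * (500/499)) := by
          apply mul_le_mul_of_nonneg_left hMtsum (by linarith)
      _ < 2*μ * (1/4) := by
          apply mul_lt_mul_of_pos_left hfinal (by linarith)
      _ = μ/2 := by ring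
  rw [hfin]
  have := abs_lt.1 hDlt
  linarith

lemma F_neg {t : ℝ} (ht : 0 < t) {μ : ℝ} (h0 : 0 < μ) (h1 : μ < 1/2) : F t μ < 0 := by
  rcases le_or_gt t (1/10) with ht' | ht'
  · rcases le_or_gt (Real.sqrt (t/2)) μ with h | h
    · exact F_neg_B1 ht h h1
    · exact F_neg_B2 ht ht' h0 h
  · rw [key_identity t μ ht]
    have hπ := Real.pi_pos
    have hsq : (0:ℝ) < Real.sqrt (π*t) := Real.sqrt_pos.2 (by positivity)
    have h2 : 0 < ∑' n : ℕ, ((n:ℝ)+1) * Real.exp (-(π^2*t)*((n:ℝ)+1)^2) *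
        Real.sin (((n:ℝ)+1)*(2*π*μ)) := by
      apply sineSum_pos
      · nlinarith [Real.pi_gt_d6]
      · positivity
      · calc 2*π*μ < 2*π*(1/2) := by
              apply mul_lt_mul_of_pos_left h1 (by positivity)
            _ = π := by ring
    have h3 : ∑' n : ℕ, ((n:ℝ)+1) * Real.exp (-π^2*t*((n:ℝ)+1)^2) *
          Real.sin (2*π*((n:ℝ)+1)*μ)
        = ∑' n : ℕ, ((n:ℝ)+1) * Real.exp (-(π^2*t)*((n:ℝ)+1)^2) *
          Real.sin (((n:ℝ)+1)*(2*π*μ)) := by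
      apply tsum_congr; intro n; ring_nf
    rw [h3]
    have : 0 < 2*π*t*Real.sqrt (π*t) := by positivity
    nlinarith

lemma F_shift (t μ : ℝ) (k : ℤ) : F t (μ - k) = F t μ := by
  unfold F
  rw [← (Equiv.subRight k).tsum_eq]
  apply tsum_congr
  intro n
  simp only [Equiv.subRight_apply]
  push_cast
  ring_nf

lemma F_odd (t μ : ℝ) : F t (-μ) = - F t μ := by
  unfold F
  rw [← (Equiv.neg ℤ).tsum_eq, ← tsum_neg]
  apply tsum_congr
  intro n
  simp only [Equiv.neg_apply]
  push_cast
  ring_nf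

lemma F_ne_zero {t : ℝ} (ht : 0 < t) {μ : ℝ} (h : ¬ ∃ k : ℤ, 2 * μ = (k:ℝ)) :
    F t μ ≠ 0 := by
  have hfr : F t μ = F t (Int.fract μ) := by
    rw [Int.fract]; exact (F_shift t μ ⌊μ⌋).symm
  have h0 : Int.fract μ ≠ 0 := by
    intro h0
    exact h ⟨2*⌊μ⌋, by have := Int.fract_add_floor μ; push_cast; nlinarith [Int.fract_add_floor μ]⟩
  have hhalf : Int.fract μ ≠ 1/2 := by
    intro h0
    exact h ⟨2*⌊μ⌋+1, by push_cast; nlinarith [Int.fract_add_floor μ]⟩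
  have h01 : 0 < Int.fract μ := lt_of_le_of_ne (Int.fract_nonneg μ) (Ne.symm h0)
  rcases lt_or_gt_of_ne hhalf with hlt | hgt
  · rw [hfr]
    exact (F_neg ht h01 hlt).ne
  · have h1 : Int.fract μ < 1 := Int.fract_lt_one μ
    have : F t (Int.fract μ) = - F t (1 - Int.fract μ) := by
      rw [← F_shift t (Int.fract μ) 1]
      have : Int.fract μ - (1:ℤ) = -(1 - Int.fract μ) := by push_cast; ring
      rw [this, F_odd]
    rw [hfr, this, neg_ne_zero]
    exact (F_neg ht (by linarith) (by linarith)).ne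

end DGauss

end DGaussAux

theorem discrete_gaussian_unbiased_iff (σ μ : ℝ) (hσ : 0 < σ) :
    (∑' x : ℤ, (x : ℝ) *
        (Real.exp (-((x : ℝ) - μ)^2 / (2 * σ^2)) /
          ∑' y : ℤ, Real.exp (-((y : ℝ) - μ)^2 / (2 * σ^2)))) = μ ↔
      ∃ k : ℤ, 2 * μ = (k : ℝ) := by
  set t := 2 * σ^2 with ht_def
  have ht : 0 < t := by positivity
  set Z := ∑' y : ℤ, Real.exp (-((y : ℝ) - μ)^2 / t) with hZ_def
  have hZ : 0 < Z := by
    apply Summable.tsum_pos (DGauss.summable_exp t μ ht) (fun n => (Real.exp_pos _).le) 0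
    exact Real.exp_pos _
  have hL : (∑' x : ℤ, (x : ℝ) * (Real.exp (-((x : ℝ) - μ)^2 / t) / Z))
      = (∑' x : ℤ, ((x : ℝ) - 0) * Real.exp (-((x : ℝ) - μ)^2 / t)) / Z := by
    rw [← tsum_div_const]
    apply tsum_congr
    intro n
    ring
  have hsub : (∑' x : ℤ, ((x : ℝ) - 0) * Real.exp (-((x : ℝ) - μ)^2 / t))
      - μ * Z = DGauss.F t μ := by
    rw [hZ_def, ← tsum_mul_left, DGauss.F,
      ← Summable.tsum_sub (DGauss.summable_linear t μ 0 ht)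
        ((DGauss.summable_exp t μ ht).mul_left μ)]
    apply tsum_congr
    intro n
    ring
  constructor
  · intro hmean
    by_contra hk
    apply DGauss.F_ne_zero ht hk
    rw [hL] at hmean
    rw [← hsub, div_eq_iff hZ.ne' |>.1 hmean]
    ring
  · rintro ⟨k, hk⟩
    have hF : DGauss.F t μ = 0 := by
      have heq : DGauss.F t μ = - DGauss.F t μ := by
        conv_lhs => rw [DGauss.F, ← (Equiv.subLeft k).tsum_eq
          (f := fun n : ℤ => ((n:ℝ) - μ) * Real.exp (-((n:ℝ) - μ)^2 / t))]
        rw [DGauss.F, ← tsum_neg]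
        apply tsum_congr
        intro n
        have h2 : ((Equiv.subLeft k n : ℤ):ℝ) - μ = -((n:ℝ) - μ) := by
          simp only [Equiv.subLeft_apply]; push_cast; linarith
        simp only [h2]
        ring_nf
      linarith
    rw [hL, div_eq_iff hZ.ne']
    linarith [hsub, hF]
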